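/- Fix real numbers σα > 0, σβ > 0 and z₀ > 0. Then, as λ → ∞, the quantity λ⁻² · log ( ∬_{{(a,b) ∈ [0,∞)² : a + b > z₀ λ}} (4ab/(σα² σβ²)) · exp(−a²/σα² − b²/σβ²) da db ) converges to −z₀²/(σα² + σβ²). -/

import Mathlib

open MeasureTheory Filter Topology Set

lemma gauss_int (b : ℝ) (hb : 0 < b) :
    ∫ x in Set.Ici (0:ℝ), x * Real.exp (-b * x ^ 2) = (2 * b)⁻¹ := by
  rw [MeasureTheory.integral_Ici_eq_integral_Ioi]
  have hderiv : ∀ x ∈ Set.Ioi (0:ℝ),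
      HasDerivAt (fun x : ℝ => -(2*b)⁻¹ * Real.exp (-b * x^2))
        (x * Real.exp (-b * x^2)) x := by
    intro x _
    have h1 : HasDerivAt (fun x : ℝ => -b * x^2) (-b * (2*x)) x := by
      simpa using ((hasDerivAt_pow 2 x).const_mul (-b))
    have h2 := (h1.exp).const_mul (-(2*b)⁻¹)
    convert h2 using 1
    · rfl
    · rfl
    field_simp
  have htend : Tendsto (fun x : ℝ => -(2*b)⁻¹ * Real.exp (-b * x^2)) atTop (𝓝 0) := by
    have h1 : Tendsto (fun x : ℝ => -b * x^2) atTop atBot := by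
      have := (tendsto_pow_atTop (n := 2) (by norm_num)).const_mul_atTop hb
      have h2 := tendsto_neg_atTop_atBot.comp this
      refine h2.congr (fun x => by simp [neg_mul])
    have := Real.tendsto_exp_atBot.comp h1
    have h3 := this.const_mul (-(2*b)⁻¹)
    simpa using h3
  have hcont : ContinuousWithinAt (fun x : ℝ => -(2*b)⁻¹ * Real.exp (-b * x^2)) (Set.Ici 0) 0 :=
    (Continuous.continuousWithinAt (by continuity))
  have := MeasureTheory.integral_Ioi_of_hasDerivAt_of_tendsto hcont hderiv
    ((integrable_mul_exp_neg_mul_sq hb).integrableOn) htend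
  rw [this]
  simp

lemma one_dim_integrable (A t : ℝ) (hA : 0 < A) (ht : 0 < t) :
    Integrable (fun x : ℝ => 2*x/A * Real.exp (-(t/A) * x^2)) := by
  have h0 : (0:ℝ) < t/A := div_pos ht hA
  have hfun : (fun x:ℝ => 2*x/A * Real.exp (-(t/A)*x^2))
      = fun x => (2/A) * (x * Real.exp (-(t/A)*x^2)) := by funext x; ring
  rw [hfun]
  exact (integrable_mul_exp_neg_mul_sq h0).const_mul _

lemma one_dim_int (A t : ℝ) (hA : 0 < A) (ht : 0 < t) :
    ∫ x in Set.Ici (0:ℝ), 2*x/A * Real.exp (-(t/A) * x^2) = t⁻¹ := by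
  have h0 : (0:ℝ) < t/A := div_pos ht hA
  have hfun : (fun x:ℝ => 2*x/A * Real.exp (-(t/A)*x^2))
      = fun x => (2/A) * (x * Real.exp (-(t/A)*x^2)) := by funext x; ring
  rw [hfun, MeasureTheory.integral_const_mul, gauss_int _ h0]
  field_simp

lemma prod_integrableOn (A B t : ℝ) (hA : 0 < A) (hB : 0 < B) (ht : 0 < t) :
    IntegrableOn (fun p : ℝ × ℝ =>
      (2*p.1/A * Real.exp (-(t/A) * p.1^2)) * (2*p.2/B * Real.exp (-(t/B) * p.2^2)))
      (Set.Ici 0 ×ˢ Set.Ici 0) := by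
  rw [IntegrableOn, MeasureTheory.Measure.volume_eq_prod, ← Measure.prod_restrict]
  exact Integrable.mul_prod ((one_dim_integrable A t hA ht).restrict)
    ((one_dim_integrable B t hB ht).restrict)

lemma prod_int (A B t : ℝ) (hA : 0 < A) (hB : 0 < B) (ht : 0 < t) :
    ∫ p in (Set.Ici 0 ×ˢ Set.Ici 0 : Set (ℝ × ℝ)),
      (2*p.1/A * Real.exp (-(t/A) * p.1^2)) * (2*p.2/B * Real.exp (-(t/B) * p.2^2))
      = t⁻¹ * t⁻¹ := by
  rw [MeasureTheory.Measure.volume_eq_prod,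
    MeasureTheory.setIntegral_prod_mul (fun x : ℝ => 2*x/A * Real.exp (-(t/A) * x^2))
      (fun y : ℝ => 2*y/B * Real.exp (-(t/B) * y^2)),
    one_dim_int A t hA ht, one_dim_int B t hB ht]

lemma h_eq_prod (A B : ℝ) (hA : A ≠ 0) (hB : B ≠ 0) :
    (fun p : ℝ × ℝ => 4 * p.1 * p.2 / (A * B) * Real.exp (-(p.1 ^ 2) / A - p.2 ^ 2 / B))
    = fun p : ℝ × ℝ =>
      (2*p.1/A * Real.exp (-(1/A) * p.1^2)) * (2*p.2/B * Real.exp (-(1/B) * p.2^2)) := by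
  funext p
  have h1 : -(p.1^2)/A - p.2^2/B = -(1/A) * p.1^2 + -(1/B) * p.2^2 := by ring
  rw [h1, Real.exp_add]
  ring

lemma S_subset (z₀ lam : ℝ) :
    {p : ℝ × ℝ | 0 ≤ p.1 ∧ 0 ≤ p.2 ∧ z₀ * lam < p.1 + p.2} ⊆
      (Set.Ici 0 ×ˢ Set.Ici 0 : Set (ℝ × ℝ)) :=
  fun p hp => ⟨hp.1, hp.2.1⟩

lemma S_meas (z₀ lam : ℝ) :
    MeasurableSet {p : ℝ × ℝ | 0 ≤ p.1 ∧ 0 ≤ p.2 ∧ z₀ * lam < p.1 + p.2} := by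
  rw [Set.setOf_and, Set.setOf_and]
  exact (measurableSet_le measurable_const measurable_fst).inter
    ((measurableSet_le measurable_const measurable_snd).inter
      (measurableSet_lt measurable_const (measurable_fst.add measurable_snd)))

lemma h_intOn (A B z₀ lam : ℝ) (hA : 0 < A) (hB : 0 < B) :
    IntegrableOn (fun p : ℝ × ℝ =>
        4 * p.1 * p.2 / (A * B) * Real.exp (-(p.1 ^ 2) / A - p.2 ^ 2 / B))
      {p : ℝ × ℝ | 0 ≤ p.1 ∧ 0 ≤ p.2 ∧ z₀ * lam < p.1 + p.2} := by
  rw [h_eq_prod A B hA.ne' hB.ne']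
  exact (prod_integrableOn A B 1 hA hB one_pos).mono_set (S_subset z₀ lam)

lemma Q_bound (A B z₀ lam a b : ℝ) (hA : 0 < A) (hB : 0 < B) (hz : 0 < z₀)
    (hlam : 0 ≤ lam) (ha : 0 ≤ a) (hb : 0 ≤ b) (hab : z₀ * lam < a + b) :
    z₀^2/(A+B)*lam^2 ≤ a^2/A + b^2/B := by
  have h1 : (z₀*lam)^2 ≤ (a+b)^2 := by nlinarith [mul_nonneg hz.le hlam]
  have key : (a+b)^2 ≤ (a^2/A + b^2/B)*(A+B) := by
    rw [div_add_div _ _ hA.ne' hB.ne', div_mul_eq_mul_div, le_div_iff₀ (by positivity)]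
    nlinarith [sq_nonneg (a*B - b*A)]
  rw [div_mul_eq_mul_div, div_le_iff₀ (by positivity)]
  nlinarith

lemma upper (A B z₀ t lam : ℝ) (hA : 0 < A) (hB : 0 < B) (hz : 0 < z₀)
    (ht : 0 < t) (ht1 : t ≤ 1) (hlam : 0 ≤ lam) :
    (∫ p in {p : ℝ × ℝ | 0 ≤ p.1 ∧ 0 ≤ p.2 ∧ z₀ * lam < p.1 + p.2},
        4 * p.1 * p.2 / (A * B) * Real.exp (-(p.1 ^ 2) / A - p.2 ^ 2 / B))
      ≤ Real.exp (-((1-t)*(z₀^2/(A+B))*lam^2)) * (t⁻¹ * t⁻¹) := by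
  set c : ℝ := -((1-t)*(z₀^2/(A+B))*lam^2) with hc
  set G : ℝ × ℝ → ℝ := fun p =>
    Real.exp c * ((2*p.1/A * Real.exp (-(t/A) * p.1^2)) * (2*p.2/B * Real.exp (-(t/B) * p.2^2)))
    with hG
  have hGint : IntegrableOn G (Set.Ici 0 ×ˢ Set.Ici 0) :=
    (prod_integrableOn A B t hA hB ht).const_mul _
  have step1 : (∫ p in {p : ℝ × ℝ | 0 ≤ p.1 ∧ 0 ≤ p.2 ∧ z₀ * lam < p.1 + p.2},
      4 * p.1 * p.2 / (A * B) * Real.exp (-(p.1 ^ 2) / A - p.2 ^ 2 / B))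
      ≤ ∫ p in {p : ℝ × ℝ | 0 ≤ p.1 ∧ 0 ≤ p.2 ∧ z₀ * lam < p.1 + p.2}, G p := by
    refine setIntegral_mono_on (h_intOn A B z₀ lam hA hB)
      (hGint.mono_set (S_subset z₀ lam)) (S_meas z₀ lam) ?_
    rintro ⟨a, b⟩ ⟨ha, hb, hab⟩
    simp only [hG]
    have h1 : -(a^2)/A - b^2/B = -(1/A) * a^2 + -(1/B) * b^2 := by ring
    have hQ := Q_bound A B z₀ lam a b hA hB hz hlam ha hb hab
    have hexp : Real.exp (-(a ^ 2) / A - b ^ 2 / B)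
        ≤ Real.exp c * (Real.exp (-(t/A) * a^2) * Real.exp (-(t/B) * b^2)) := by
      rw [← Real.exp_add, ← Real.exp_add, Real.exp_le_exp]
      have expand : c + (-(t/A) * a^2 + -(t/B) * b^2)
          = -((1-t)*(z₀^2/(A+B))*lam^2) - t*(a^2/A) - t*(b^2/B) := by
        rw [hc]; ring
      have lhs_eq : -(a ^ 2) / A - b ^ 2 / B
          = -(1-t)*(a^2/A + b^2/B) - t*(a^2/A) - t*(b^2/B) := by ring
      rw [expand, lhs_eq]
      nlinarith
    calc 4 * a * b / (A * B) * Real.exp (-(a ^ 2) / A - b ^ 2 / B)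
        ≤ 4 * a * b / (A * B) *
            (Real.exp c * (Real.exp (-(t/A) * a^2) * Real.exp (-(t/B) * b^2))) := by
          apply mul_le_mul_of_nonneg_left hexp (by positivity)
      _ = Real.exp c * ((2*a/A * Real.exp (-(t/A) * a^2)) * (2*b/B * Real.exp (-(t/B) * b^2))) := by
          ring
  have step2 : (∫ p in {p : ℝ × ℝ | 0 ≤ p.1 ∧ 0 ≤ p.2 ∧ z₀ * lam < p.1 + p.2}, G p)
      ≤ ∫ p in (Set.Ici 0 ×ˢ Set.Ici 0 : Set (ℝ × ℝ)), G p := by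
    refine setIntegral_mono_set hGint ?_ ((S_subset z₀ lam).eventuallyLE)
    refine ae_restrict_of_forall_mem (measurableSet_Ici.prod measurableSet_Ici) ?_
    rintro ⟨a, b⟩ ⟨(ha : (0:ℝ) ≤ a), (hb : (0:ℝ) ≤ b)⟩
    simp only [hG]
    positivity
  have step3 : (∫ p in (Set.Ici 0 ×ˢ Set.Ici 0 : Set (ℝ × ℝ)), G p)
      = Real.exp c * (t⁻¹ * t⁻¹) := by
    simp only [hG]
    rw [MeasureTheory.integral_const_mul, prod_int A B t hA hB ht]
  linarith [step1, step2, step3.le, step3.ge]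

lemma lower (A B z₀ lam : ℝ) (hA : 0 < A) (hB : 0 < B) (hz : 0 < z₀) (hlam : 1 ≤ lam) :
    4*(z₀*A/(A+B))/(A*B) *
        Real.exp (-(z₀^2/(A+B)*lam^2 + 6*z₀/(A+B)*lam + (1/A + 4/B)))
      ≤ ∫ p in {p : ℝ × ℝ | 0 ≤ p.1 ∧ 0 ≤ p.2 ∧ z₀ * lam < p.1 + p.2},
        4 * p.1 * p.2 / (A * B) * Real.exp (-(p.1 ^ 2) / A - p.2 ^ 2 / B) := by
  have hlam0 : (0:ℝ) < lam := lt_of_lt_of_le one_pos hlam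
  obtain ⟨aS, haS⟩ : ∃ x : ℝ, x = z₀*lam*A/(A+B) := ⟨_, rfl⟩
  obtain ⟨bS, hbS⟩ : ∃ x : ℝ, x = z₀*lam*B/(A+B) := ⟨_, rfl⟩
  have haS0 : 0 < aS := by rw [haS]; positivity
  have hbS0 : 0 < bS := by rw [hbS]; positivity
  have habS : aS + bS = z₀*lam := by rw [haS, hbS]; field_simp
  set T : Set (ℝ × ℝ) := Set.Icc aS (aS+1) ×ˢ Set.Icc (bS+1) (bS+2) with hT
  have hTsub : T ⊆ {p : ℝ × ℝ | 0 ≤ p.1 ∧ 0 ≤ p.2 ∧ z₀ * lam < p.1 + p.2} := by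
    rintro ⟨a, b⟩ ⟨⟨ha1, ha2⟩, ⟨hb1, hb2⟩⟩
    exact ⟨le_trans haS0.le ha1, le_trans (by linarith) hb1, by
      simp only [] at *; linarith⟩
  have hTm : MeasurableSet T := measurableSet_Icc.prod measurableSet_Icc
  have hvolT : (volume : Measure (ℝ × ℝ)) T = 1 := by
    rw [hT, MeasureTheory.Measure.volume_eq_prod, Measure.prod_prod,
      Real.volume_Icc, Real.volume_Icc]
    norm_num
  obtain ⟨c₀, hc₀⟩ : ∃ x : ℝ, x = 4*(z₀*A/(A+B))/(A*B) *
      Real.exp (-(z₀^2/(A+B)*lam^2 + 6*z₀/(A+B)*lam + (1/A + 4/B))) := ⟨_, rfl⟩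
  have hpoint : ∀ p ∈ T, c₀ ≤ 4 * p.1 * p.2 / (A * B) *
      Real.exp (-(p.1 ^ 2) / A - p.2 ^ 2 / B) := by
    rintro ⟨a, b⟩ ⟨⟨ha1, ha2⟩, ⟨hb1, hb2⟩⟩
    simp only [] at ha1 ha2 hb1 hb2 ⊢
    have ha0 : 0 ≤ a := le_trans haS0.le ha1
    have hb0 : 0 ≤ b := le_trans (by linarith) hb1
    have hb1' : (1:ℝ) ≤ b := by linarith
    have hcoef : 4*(z₀*A/(A+B))/(A*B) ≤ 4*a*b/(A*B) := by
      rw [div_le_div_iff_of_pos_right (by positivity)]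
      have h1 : z₀*A/(A+B) ≤ aS := by
        rw [haS, show z₀*lam*A/(A+B) = lam * (z₀*A/(A+B)) by ring]
        exact le_mul_of_one_le_left (by positivity) hlam
      nlinarith [mul_nonneg ha0 (sub_nonneg.2 hb1'),
        (show (0:ℝ) ≤ z₀*A/(A+B) by positivity)]
    have hexp : Real.exp (-(z₀^2/(A+B)*lam^2 + 6*z₀/(A+B)*lam + (1/A + 4/B)))
        ≤ Real.exp (-(a ^ 2) / A - b ^ 2 / B) := by
      rw [Real.exp_le_exp]
      have key : (aS+1)^2/A + (bS+2)^2/B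
          = z₀^2/(A+B)*lam^2 + 6*z₀/(A+B)*lam + (1/A + 4/B) := by
        rw [haS, hbS]; field_simp; ring
      have h1 : a^2/A ≤ (aS+1)^2/A := by
        rw [div_le_div_iff_of_pos_right hA]
        exact pow_le_pow_left₀ ha0 ha2 2
      have h2 : b^2/B ≤ (bS+2)^2/B := by
        rw [div_le_div_iff_of_pos_right hB]
        exact pow_le_pow_left₀ hb0 hb2 2
      have e1 : -(a^2)/A - b^2/B = -(a^2/A + b^2/B) := by ring
      rw [e1, ← key]
      linarith
    calc c₀ = 4*(z₀*A/(A+B))/(A*B) *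
          Real.exp (-(z₀^2/(A+B)*lam^2 + 6*z₀/(A+B)*lam + (1/A + 4/B))) := hc₀
      _ ≤ 4*a*b/(A*B) *
          Real.exp (-(z₀^2/(A+B)*lam^2 + 6*z₀/(A+B)*lam + (1/A + 4/B))) :=
          mul_le_mul_of_nonneg_right hcoef (Real.exp_pos _).le
      _ ≤ 4*a*b/(A*B) * Real.exp (-(a ^ 2) / A - b ^ 2 / B) :=
          mul_le_mul_of_nonneg_left hexp (by positivity)
  have hge := setIntegral_ge_of_const_le hTm (by rw [hvolT]; exact ENNReal.one_ne_top)
    hpoint ((h_intOn A B z₀ lam hA hB).mono_set hTsub)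
  have hc₀T : c₀ * ((volume : Measure (ℝ × ℝ)) T).toReal = c₀ := by rw [hvolT]; simp
  rw [← hc₀]
  calc c₀ = c₀ * ((volume : Measure (ℝ × ℝ)) T).toReal := hc₀T.symm
    _ ≤ ∫ p in T, 4 * p.1 * p.2 / (A * B) * Real.exp (-(p.1 ^ 2) / A - p.2 ^ 2 / B) := by rw [mul_comm]; exact hge
    _ ≤ _ := setIntegral_mono_set (h_intOn A B z₀ lam hA hB)
        (ae_restrict_of_forall_mem (S_meas z₀ lam)
          (fun p hp => mul_nonneg (div_nonneg
            (mul_nonneg (mul_nonneg (by norm_num) hp.1) hp.2.1)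
            (by positivity)) (Real.exp_pos _).le))
        (hTsub.eventuallyLE)

lemma aux_LDP (A B z₀ : ℝ) (hA : 0 < A) (hB : 0 < B) (hz₀ : 0 < z₀) :
    Tendsto (fun lam : ℝ =>
      (lam ^ 2)⁻¹ * Real.log (∫ p in {p : ℝ × ℝ | 0 ≤ p.1 ∧ 0 ≤ p.2 ∧ z₀ * lam < p.1 + p.2},
        4 * p.1 * p.2 / (A * B) * Real.exp (-(p.1 ^ 2) / A - p.2 ^ 2 / B)))
      atTop (𝓝 (-(z₀ ^ 2) / (A + B))) := by
  have hm0 : 0 < z₀^2/(A+B) := by positivity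
  obtain ⟨m, hm⟩ : ∃ x : ℝ, x = z₀^2/(A+B) := ⟨_, rfl⟩
  have hm0 : 0 < m := hm ▸ hm0
  obtain ⟨D, hD⟩ : ∃ x : ℝ, x = 4*(z₀*A/(A+B))/(A*B) := ⟨_, rfl⟩
  have hD0 : 0 < D := by rw [hD]; positivity
  have hlimit_eq : -(z₀^2)/(A+B) = -m := by rw [hm]; ring
  rw [hlimit_eq]
  rw [Metric.tendsto_nhds]
  intro ε hε
  obtain ⟨t, ht⟩ : ∃ x : ℝ, x = min (1/2) (ε/(2*(m+1))) := ⟨_, rfl⟩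
  have ht0 : 0 < t := ht ▸ lt_min (by norm_num) (by positivity)
  have ht1 : t ≤ 1 := le_trans (ht ▸ min_le_left _ _) (by norm_num)
  have htm : t*m < ε/2 := by
    have h1 : t ≤ ε/(2*(m+1)) := ht ▸ min_le_right _ _
    have h2 : t*m ≤ (ε/(2*(m+1)))*m := mul_le_mul_of_nonneg_right h1 hm0.le
    have h3 : (ε/(2*(m+1)))*m < ε/2 := by
      rw [div_mul_eq_mul_div, div_lt_div_iff₀ (by positivity) (by norm_num)]
      nlinarith
    linarith
  have a2 : Tendsto (fun lam : ℝ => (lam^2)⁻¹) atTop (𝓝 0) := by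
    have := (tendsto_pow_atTop (n := 2) (by norm_num)).inv_tendsto_atTop (α := ℝ)
    simpa [Pi.inv_def] using this
  have htend1 : Tendsto (fun lam : ℝ =>
      (6*z₀/(A+B))*lam⁻¹ + ((1/A+4/B) - Real.log D)*(lam^2)⁻¹) atTop (𝓝 0) := by
    have h1 := (tendsto_inv_atTop_zero (𝕜 := ℝ)).const_mul (6*z₀/(A+B))
    have h2 := a2.const_mul ((1/A+4/B) - Real.log D)
    simpa using h1.add h2
  have htend3 : Tendsto (fun lam : ℝ => (-(2*Real.log t))*(lam^2)⁻¹) atTop (𝓝 0) := by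
    simpa using a2.const_mul (-(2*Real.log t))
  filter_upwards [eventually_ge_atTop (1:ℝ), htend1.eventually_lt_const hε,
    htend3.eventually_lt_const (by positivity : (0:ℝ) < ε/2)] with lam h1 h2 h3
  have hlam0 : (0:ℝ) < lam := lt_of_lt_of_le one_pos h1
  have hlam2 : (0:ℝ) < lam^2 := by positivity
  have hlow := lower A B z₀ lam hA hB hz₀ h1
  have hup := upper A B z₀ t lam hA hB hz₀ ht0 ht1 hlam0.le
  rw [← hm, ← hD] at hlow
  rw [← hm] at hup
  set I := ∫ p in {p : ℝ × ℝ | 0 ≤ p.1 ∧ 0 ≤ p.2 ∧ z₀ * lam < p.1 + p.2},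
      4 * p.1 * p.2 / (A * B) * Real.exp (-(p.1 ^ 2) / A - p.2 ^ 2 / B) with hI
  have hIpos : 0 < I := lt_of_lt_of_le (by positivity) hlow
  have hloglow : Real.log D - (m*lam^2 + 6*z₀/(A+B)*lam + (1/A + 4/B)) ≤ Real.log I := by
    have := Real.log_le_log (by positivity) hlow
    rwa [Real.log_mul hD0.ne' (Real.exp_pos _).ne', Real.log_exp] at this
  have hloghigh : Real.log I ≤ -((1-t)*m*lam^2) + (-Real.log t + -Real.log t) := by
    have := Real.log_le_log hIpos hup
    rwa [Real.log_mul (Real.exp_pos _).ne' (by positivity), Real.log_exp,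
      Real.log_mul (inv_ne_zero ht0.ne') (inv_ne_zero ht0.ne'), Real.log_inv] at this
  rw [Real.dist_eq, abs_sub_lt_iff]
  constructor
  · -- f lam - (-m) < ε
    have hmul := mul_le_mul_of_nonneg_left hloghigh (inv_nonneg.2 hlam2.le)
    have e : (lam^2)⁻¹ * (-((1-t)*m*lam^2) + (-Real.log t + -Real.log t))
        = -(1-t)*m + (-(2*Real.log t))*(lam^2)⁻¹ := by
      field_simp
      ring
    rw [e] at hmul
    have : -(1-t)*m + (-(2*Real.log t))*(lam^2)⁻¹ - -m < ε := by
      have : -(1-t)*m - -m = t*m := by ring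
      linarith
    linarith
  · -- -m - f lam < ε
    have hmul := mul_le_mul_of_nonneg_left hloglow (inv_nonneg.2 hlam2.le)
    have e : (lam^2)⁻¹ * (Real.log D - (m*lam^2 + 6*z₀/(A+B)*lam + (1/A + 4/B)))
        = -m - ((6*z₀/(A+B))*lam⁻¹ + ((1/A+4/B) - Real.log D)*(lam^2)⁻¹) := by
      field_simp
      ring
    rw [e] at hmul
    linarith





/-- Large deviations principle for the ℓ¹ norm of the moduli of two independent
mean-zero complex Gaussians with variances `σα²` and `σβ²`. -/
theorem ell1_LDP (σα σβ z₀ : ℝ) (hσα : 0 < σα) (hσβ : 0 < σβ) (hz₀ : 0 < z₀) :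
    Tendsto (fun lam : ℝ =>
      (lam ^ 2)⁻¹ * Real.log (∫ p in {p : ℝ × ℝ | 0 ≤ p.1 ∧ 0 ≤ p.2 ∧ z₀ * lam < p.1 + p.2},
        4 * p.1 * p.2 / (σα ^ 2 * σβ ^ 2) *
          Real.exp (-(p.1 ^ 2) / σα ^ 2 - p.2 ^ 2 / σβ ^ 2)))
      atTop (𝓝 (-(z₀ ^ 2) / (σα ^ 2 + σβ ^ 2))) :=
  aux_LDP (σα^2) (σβ^2) z₀ (by positivity) (by positivity) hz₀
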